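/- Under the hypotheses of the Wang-Elia setup, if θ ∈ ℝ is a critical point of the global cost (Σᵢ ∇fᵢ(θ) = 0), then the pair (x*, z*) with x* = 𝟙θ and z* = −γ S (SᵀKS)⁻¹ Sᵀ Φ(𝟙θ) is a fixed point of the map (x,z) ↦ ((I−K)x − Kz − γΦ(x), z + Kx). -/

import Mathlib

open Matrix

/-- Auxiliary: a vector orthogonal to the columns of `S` and to `𝟙` is zero. -/
lemma wang_elia_aux_perp_zero
    (N : ℕ) (hN : 2 ≤ N)
    (S : Matrix (Fin N) (Fin (N - 1)) ℝ)
    (hS1 : Sᵀ *ᵥ (fun _ => (1 : ℝ)) = 0)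
    (hS2 : Sᵀ * S = 1)
    (ψ : Fin N → ℝ)
    (hSψ : Sᵀ *ᵥ ψ = 0)
    (h1ψ : ∑ j, ψ j = 0) : ψ = 0 := by
  classical
  set B : Matrix (Fin N) (Fin N) ℝ :=
    Matrix.of fun i j => if h : (i : ℕ) < N - 1 then S j ⟨(i : ℕ), h⟩ else 1 with hB
  have hBψ : B *ᵥ ψ = 0 := by
    funext i
    simp only [mulVec, dotProduct, hB, Matrix.of_apply, Pi.zero_apply]
    by_cases h : (i : ℕ) < N - 1
    · simp only [h, dif_pos]
      have := congrFun hSψ ⟨(i : ℕ), h⟩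
      simpa [mulVec, dotProduct, transpose_apply] using this
    · simp only [h, dif_neg, not_false_iff, one_mul]
      exact h1ψ
  -- B * Bᵀ is diagonal with nonzero entries, so det B ≠ 0
  have hBBT : B * Bᵀ = Matrix.diagonal (fun i : Fin N => if (i : ℕ) < N - 1 then (1 : ℝ) else (N : ℝ)) := by
    ext i j
    simp only [Matrix.mul_apply, transpose_apply, hB, Matrix.of_apply, diagonal_apply]
    by_cases hi : (i : ℕ) < N - 1 <;> by_cases hj : (j : ℕ) < N - 1
    · simp only [hi, hj, dif_pos]
      have := congrFun (congrFun hS2 ⟨(i : ℕ), hi⟩) ⟨(j : ℕ), hj⟩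
      simp only [Matrix.mul_apply, transpose_apply, Matrix.one_apply] at this
      rw [this]
      by_cases hij : i = j
      · simp [hij, Fin.ext_iff]
      · have : (⟨(i : ℕ), hi⟩ : Fin (N - 1)) ≠ ⟨(j : ℕ), hj⟩ := by
          simp only [ne_eq, Fin.mk.injEq]
          exact fun h => hij (Fin.ext h)
        simp [this, hij, hi]
    · have hij : i ≠ j := fun h => hj (h ▸ hi)
      simp only [hi, hj, dif_pos, dif_neg, not_false_iff, mul_one, hij, if_false]
      have := congrFun hS1 ⟨(i : ℕ), hi⟩
      simpa [mulVec, dotProduct, transpose_apply] using this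
    · have hij : i ≠ j := fun h => hi (h ▸ hj)
      simp only [hi, hj, dif_pos, dif_neg, not_false_iff, one_mul, hij, if_false]
      have := congrFun hS1 ⟨(j : ℕ), hj⟩
      simpa [mulVec, dotProduct, transpose_apply] using this
    · have hij : i = j := by
        have hi' : (i : ℕ) = N - 1 := le_antisymm (Nat.lt_succ_iff.mp (by
          have := i.isLt
          omega)) (le_of_not_gt hi)
        have hj' : (j : ℕ) = N - 1 := le_antisymm (Nat.lt_succ_iff.mp (by
          have := j.isLt
          omega)) (le_of_not_gt hj)
        exact Fin.ext (hi'.trans hj'.symm)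
      simp [hij, hi, hj, Finset.card_univ]
  have hdetB : IsUnit B.det := by
    have h1 : B.det * Bᵀ.det =
        ∏ i : Fin N, (if (i : ℕ) < N - 1 then (1 : ℝ) else N) := by
      rw [← det_mul, hBBT, det_diagonal]
    have h2 : (∏ i : Fin N, (if (i : ℕ) < N - 1 then (1 : ℝ) else N)) ≠ 0 := by
      apply Finset.prod_ne_zero_iff.mpr
      intro i _
      by_cases h : (i : ℕ) < N - 1 <;> simp [h]
      omega
    have : B.det ≠ 0 := by
      intro h
      rw [h, zero_mul] at h1
      exact h2 h1.symm
    exact isUnit_iff_ne_zero.mpr this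
  calc ψ = (1 : Matrix (Fin N) (Fin N) ℝ) *ᵥ ψ := by rw [one_mulVec]
    _ = (B⁻¹ * B) *ᵥ ψ := by rw [nonsing_inv_mul B hdetB]
    _ = B⁻¹ *ᵥ (B *ᵥ ψ) := by rw [mulVec_mulVec]
    _ = 0 := by rw [hBψ, mulVec_zero]

/-- If `θ` is a critical point of the global cost
(`Σᵢ ∇fᵢ(θ) = 0`), then `(x*, z*)` with `x* = 𝟙θ` and
`z* = −γ S (SᵀKS)⁻¹ Sᵀ Φ(𝟙θ)` is a fixed point of the Wang-Elia map. -/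
theorem wang_elia_optimal_equilibrium_exists
    (N : ℕ) (hN : 2 ≤ N)
    (f : Fin N → ℝ → ℝ)
    (hf : ∀ i, ContDiff ℝ 1 (f i))
    (K : Matrix (Fin N) (Fin N) ℝ)
    (hKsym : Kᵀ = K)
    (hker : ∀ v : Fin N → ℝ, K *ᵥ v = 0 ↔ ∃ c : ℝ, v = fun _ => c)
    (hspec : spectrum ℝ K ⊆ Set.Ico (0 : ℝ) 1)
    (S : Matrix (Fin N) (Fin (N - 1)) ℝ)
    (hS1 : Sᵀ *ᵥ (fun _ => (1 : ℝ)) = 0)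
    (hS2 : Sᵀ * S = 1)
    (γ : ℝ) (hγ : 0 < γ)
    (Φ : (Fin N → ℝ) → (Fin N → ℝ))
    (hΦ : Φ = fun x i => deriv (f i) (x i))
    (θ : ℝ) (hθ : ∑ i, deriv (f i) θ = 0)
    (xstar zstar : Fin N → ℝ)
    (hx : xstar = fun _ => θ)
    (hz : zstar = -(γ • (S *ᵥ ((Sᵀ * K * S)⁻¹ *ᵥ (Sᵀ *ᵥ Φ xstar))))) :
    (1 - K) *ᵥ xstar - K *ᵥ zstar - γ • Φ xstar = xstar ∧
    zstar + K *ᵥ xstar = zstar := by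
  classical
  have hKher : K.IsHermitian := by
    rw [Matrix.IsHermitian, conjTranspose_eq_transpose_of_trivial, hKsym]
  have hpsd : K.PosSemidef :=
    (Matrix.IsHermitian.posSemidef_iff_eigenvalues_nonneg hKher).mpr fun i =>
      (hspec (Matrix.IsHermitian.eigenvalues_mem_spectrum_real hKher i)).1
  have hKx : K *ᵥ xstar = 0 := by
    rw [hx]; exact (hker _).2 ⟨θ, rfl⟩
  have hKone : K *ᵥ (fun _ : Fin N => (1 : ℝ)) = 0 := (hker _).2 ⟨1, rfl⟩
  -- M = SᵀKS is invertible
  set M := Sᵀ * K * S with hM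
  have hMdet : IsUnit M.det := by
    rw [isUnit_iff_ne_zero]
    intro hdet
    obtain ⟨v, hv0, hv⟩ := (Matrix.exists_mulVec_eq_zero_iff).mpr hdet
    -- v ⬝ M v = (Sv) ⬝ K (Sv) = 0
    have key : Sᵀ *ᵥ (K *ᵥ (S *ᵥ v)) = M *ᵥ v := by
      rw [mulVec_mulVec, mulVec_mulVec, hM, Matrix.mul_assoc]
    have h1 : star (S *ᵥ v) ⬝ᵥ (K *ᵥ (S *ᵥ v)) = 0 := by
      calc star (S *ᵥ v) ⬝ᵥ (K *ᵥ (S *ᵥ v))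
          = (v ᵥ* Sᵀ) ⬝ᵥ (K *ᵥ (S *ᵥ v)) := by rw [star_trivial, vecMul_transpose]
        _ = v ⬝ᵥ (Sᵀ *ᵥ (K *ᵥ (S *ᵥ v))) := (dotProduct_mulVec v Sᵀ _).symm
        _ = v ⬝ᵥ (M *ᵥ v) := by rw [key]
        _ = 0 := by rw [hv, dotProduct_zero]
    have h2 : K *ᵥ (S *ᵥ v) = 0 := (hpsd.dotProduct_mulVec_zero_iff _).1 h1
    obtain ⟨c, hc⟩ := (hker _).1 h2
    have h3 : v = c • (Sᵀ *ᵥ fun _ => (1 : ℝ)) := by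
      calc v = (1 : Matrix (Fin (N-1)) (Fin (N-1)) ℝ) *ᵥ v := (one_mulVec v).symm
        _ = (Sᵀ * S) *ᵥ v := by rw [hS2]
        _ = Sᵀ *ᵥ (S *ᵥ v) := by rw [mulVec_mulVec]
        _ = c • (Sᵀ *ᵥ fun _ => (1 : ℝ)) := by
            rw [hc, show (fun _ : Fin N => c) = c • (fun _ : Fin N => (1 : ℝ)) by
              funext i; simp, mulVec_smul]
    rw [hS1, smul_zero] at h3
    exact hv0 h3
  -- the key identity: K S M⁻¹ Sᵀ Φ = Φ
  set w := Sᵀ *ᵥ Φ xstar with hw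
  set y := S *ᵥ (M⁻¹ *ᵥ w) with hy
  have hsum : ∑ j, Φ xstar j = 0 := by
    rw [hΦ, hx]; simpa using hθ
  have hψ : Φ xstar - K *ᵥ y = 0 := by
    apply wang_elia_aux_perp_zero N hN S hS1 hS2
    · -- Sᵀ (Φ - K y) = w - M M⁻¹ w = 0
      rw [mulVec_sub]
      have : Sᵀ *ᵥ (K *ᵥ y) = w := by
        rw [hy, mulVec_mulVec, mulVec_mulVec, mulVec_mulVec]
        show (M * M⁻¹) *ᵥ w = w
        rw [Matrix.mul_nonsing_inv M hMdet, one_mulVec]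
      rw [this, hw, sub_self]
    · -- 𝟙ᵀ (Φ - K y) = 0
      have h1K : (fun _ : Fin N => (1 : ℝ)) ᵥ* K = 0 := by
        rw [← mulVec_transpose, hKsym]
        exact hKone
      have : ∑ j, (K *ᵥ y) j = 0 := by
        have : (fun _ : Fin N => (1 : ℝ)) ⬝ᵥ (K *ᵥ y) = 0 := by
          rw [dotProduct_mulVec, h1K, zero_dotProduct]
        simpa [dotProduct] using this
      simp only [Pi.sub_apply, Finset.sum_sub_distrib, hsum, this, sub_zero]
  have hKy : K *ᵥ y = Φ xstar := by
    have := sub_eq_zero.mp hψ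
    exact this.symm
  constructor
  · have hKz : K *ᵥ zstar = -(γ • Φ xstar) := by
      rw [hz, mulVec_neg, mulVec_smul, hKy]
    rw [sub_mulVec, one_mulVec, hKx, hKz]
    abel
  · rw [hKx, add_zero]
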